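/- arXiv:1012.0213 — 2 statements merged into one kernel-verified Lean document; each statement's English description precedes it below -/
import Mathlib

section
/- Let p and ℓ be distinct primes. Every continuous group homomorphism χ : ℤ_p^× → ℚ_ℓ^× is trivial on 1 + p^{n+1}ℤ_p for some natural number n; that is, there exists n ≥ 0 such that χ(u) = 1 for every unit u ∈ ℤ_p^× with u - 1 ∈ p^{n+1}ℤ_p. -/
open Topology Filter

private lemma norm_sum_le_aux {ℓ : ℕ} [Fact ℓ.Prime] (f : ℕ → ℚ_[ℓ]) (n : ℕ) (C : ℝ)
    (h : ∀ i ∈ Finset.range n, ‖f i‖ ≤ C) (hC : 0 ≤ C) :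
    ‖∑ i ∈ Finset.range n, f i‖ ≤ C := by
  induction n with
  | zero => simpa using hC
  | succ q ihq =>
      rw [Finset.sum_range_succ]
      exact (Padic.nonarchimedean _ _).trans
        (max_le (ihq fun i hi => h i (Finset.mem_range.mpr (by simp at hi ⊢; omega)))
          (h q (Finset.self_mem_range_succ q)))

open Finset in
private lemma geom_aux {R : Type*} [CommRing R] (a : R) (n : ℕ) :
    a - 1 ∣ (∑ i ∈ range n, a ^ i) - n := by
  have : (∑ i ∈ range n, a ^ i) - n = ∑ i ∈ range n, (a ^ i - 1) := by
    rw [Finset.sum_sub_distrib]; simp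
  rw [this]
  exact Finset.dvd_sum fun i _ => by simpa using sub_dvd_pow_sub_pow a 1 i

private lemma pow_step {p : ℕ} [Fact p.Prime] {k : ℕ} (hk : 1 ≤ k) {a : ℤ_[p]}
    (h : (p : ℤ_[p]) ^ k ∣ a - 1) : (p : ℤ_[p]) ^ (k + 1) ∣ a ^ p - 1 := by
  obtain ⟨t, ht⟩ := geom_aux a p
  have key : a ^ p - 1 = (a - 1) * p + (a - 1) ^ 2 * t := by
    have := geom_sum_mul a p
    rw [← this]
    ring_nf
    rw [sub_eq_iff_eq_add] at ht
    rw [ht]; ring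
  rw [key]
  apply dvd_add
  · rw [pow_succ]
    exact mul_dvd_mul h dvd_rfl
  · apply Dvd.dvd.mul_right
    calc (p : ℤ_[p]) ^ (k + 1) ∣ (p : ℤ_[p]) ^ (k + k) := pow_dvd_pow _ (by omega)
    _ = ((p : ℤ_[p]) ^ k) ^ 2 := by rw [← pow_mul, mul_two]
    _ ∣ (a - 1) ^ 2 := pow_dvd_pow_of_dvd h 2

private lemma pow_iter {p : ℕ} [Fact p.Prime] {k : ℕ} (hk : 1 ≤ k) {a : ℤ_[p]}
    (h : (p : ℤ_[p]) ^ k ∣ a - 1) (m : ℕ) :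
    (p : ℤ_[p]) ^ (k + m) ∣ a ^ p ^ m - 1 := by
  induction m with
  | zero => simpa using h
  | succ m ih =>
      have := pow_step (by omega : 1 ≤ k + m) ih
      rw [← pow_mul, ← pow_succ] at this
      simpa [add_assoc] using this

/-- In `ℚ_ℓ`, if `‖x - 1‖ < 1` and `ℓ ∤ p` then `‖x ^ p - 1‖ = ‖x - 1‖`. -/
private lemma norm_pow_sub_one {ℓ : ℕ} [Fact ℓ.Prime] {p : ℕ} (hp : ¬ (ℓ : ℤ) ∣ (p : ℤ))
    {x : ℚ_[ℓ]} (hx : ‖x - 1‖ < 1) : ‖x ^ p - 1‖ = ‖x - 1‖ := by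
  have hx1 : ‖x‖ ≤ 1 := by
    have := Padic.nonarchimedean (x - 1) 1
    simpa using this.trans (by simp [le_of_lt hx])
  have hpow : ∀ i : ℕ, ‖x ^ i - 1‖ ≤ ‖x - 1‖ := by
    intro i
    induction i with
    | zero => simp
    | succ i ih =>
        have : x ^ (i + 1) - 1 = x * (x ^ i - 1) + (x - 1) := by ring
        rw [this]
        refine (Padic.nonarchimedean _ _).trans (max_le ?_ le_rfl)
        calc ‖x * (x ^ i - 1)‖ = ‖x‖ * ‖x ^ i - 1‖ := norm_mul _ _
        _ ≤ 1 * ‖x - 1‖ := mul_le_mul hx1 ih (norm_nonneg _) zero_le_one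
        _ = ‖x - 1‖ := one_mul _
  set S : ℚ_[ℓ] := ∑ i ∈ Finset.range p, x ^ i with hS
  have hSp : ‖S - p‖ ≤ ‖x - 1‖ := by
    have : S - (p : ℚ_[ℓ]) = ∑ i ∈ Finset.range p, (x ^ i - 1) := by
      rw [Finset.sum_sub_distrib]; simp [hS]
    rw [this]
    exact norm_sum_le_aux _ _ _ (fun i _ => hpow i) (norm_nonneg _)
  have hnp : ‖(p : ℚ_[ℓ])‖ = 1 := by
    have h1 : ‖((p : ℤ) : ℚ_[ℓ])‖ ≤ 1 := Padic.norm_int_le_one _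
    have h2 : ¬ ‖((p : ℤ) : ℚ_[ℓ])‖ < 1 := by
      rw [Padic.norm_intCast_lt_one_iff]; exact_mod_cast hp
    push_cast at h1 h2
    linarith [lt_or_eq_of_le h1]
  have hSnorm : ‖S‖ = 1 := by
    have hub : ‖S‖ ≤ 1 := by
      have : S = (p : ℚ_[ℓ]) + (S - p) := by ring
      rw [this]
      exact (Padic.nonarchimedean _ _).trans
        (max_le hnp.le (hSp.trans hx.le))
    have hlb : (1 : ℝ) ≤ ‖S‖ := by
      have h' : ‖(p : ℚ_[ℓ])‖ ≤ max ‖S‖ ‖S - p‖ := by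
        have h2 := Padic.nonarchimedean S (-(S - p))
        rw [norm_neg] at h2
        have e : S + -(S - (p : ℚ_[ℓ])) = p := by ring
        rwa [e] at h2
      rw [hnp] at h'
      rcases max_cases ‖S‖ ‖S - p‖ with ⟨he, _⟩ | ⟨he, _⟩
      · rwa [he] at h'
      · exfalso; rw [he] at h'; linarith [hSp.trans_lt hx]
    linarith
  calc ‖x ^ p - 1‖ = ‖S * (x - 1)‖ := by rw [geom_sum_mul]
  _ = ‖S‖ * ‖x - 1‖ := norm_mul _ _
  _ = ‖x - 1‖ := by rw [hSnorm, one_mul]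

/-- Let `p` and `ℓ` be distinct primes. Every continuous group homomorphism
`χ : ℤ_pˣ → ℚ_ℓˣ` is trivial on `1 + p^(n+1)ℤ_p` for some natural number `n`. -/
theorem continuous_padic_char_finite_depth (p ℓ : ℕ) [Fact p.Prime] [Fact ℓ.Prime]
    (hpl : p ≠ ℓ) (χ : ℤ_[p]ˣ →* ℚ_[ℓ]ˣ) (hχ : Continuous χ) :
    ∃ n : ℕ, ∀ u : ℤ_[p]ˣ, (p : ℤ_[p]) ^ (n + 1) ∣ ((u : ℤ_[p]) - 1) → χ u = 1 := by
  have hp : p.Prime := Fact.out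
  have hlp : ¬ (ℓ : ℤ) ∣ (p : ℤ) := by
    rw [Int.natCast_dvd_natCast]
    intro h
    exact hpl ((Nat.prime_dvd_prime_iff_eq Fact.out hp).mp h).symm
  -- the neighborhood lemma
  have nbhd : ∀ ε : ℝ, 0 < ε → ∃ n : ℕ, ∀ u : ℤ_[p]ˣ,
      (p : ℤ_[p]) ^ (n + 1) ∣ ((u : ℤ_[p]) - 1) → ‖((χ u : ℚ_[ℓ]ˣ) : ℚ_[ℓ]) - 1‖ < ε := by
    intro ε hε
    have hf : Continuous fun u : ℤ_[p]ˣ => ((χ u : ℚ_[ℓ]ˣ) : ℚ_[ℓ]) :=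
      Units.continuous_val.comp hχ
    have hmem : (fun u : ℤ_[p]ˣ => ((χ u : ℚ_[ℓ]ˣ) : ℚ_[ℓ])) ⁻¹' (Metric.ball 1 ε) ∈ 𝓝 (1 : ℤ_[p]ˣ) := by
      apply hf.continuousAt.preimage_mem_nhds
      rw [map_one]
      exact Metric.ball_mem_nhds _ hε
    rw [Units.isOpenEmbedding_val.isEmbedding.nhds_eq_comap, Filter.mem_comap] at hmem
    obtain ⟨t, ht, hts⟩ := hmem
    rw [Metric.mem_nhds_iff] at ht
    obtain ⟨δ, hδ, hball⟩ := ht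
    obtain ⟨n, hn⟩ := exists_pow_lt_of_lt_one hδ
      (by
        rw [inv_lt_one_iff₀]
        right
        exact_mod_cast hp.one_lt : (p : ℝ)⁻¹ < 1)
    refine ⟨n, fun u hu => ?_⟩
    have hnorm : ‖(u : ℤ_[p]) - 1‖ ≤ (p : ℝ) ^ (-(n + 1 : ℕ) : ℤ) := by
      rw [PadicInt.norm_le_pow_iff_mem_span_pow, Ideal.mem_span_singleton]
      exact hu
    have hnorm' : ‖(u : ℤ_[p]) - 1‖ < δ := by
      refine lt_of_le_of_lt hnorm ?_
      calc (p : ℝ) ^ (-(n + 1 : ℕ) : ℤ) ≤ (p : ℝ)⁻¹ ^ n := by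
            rw [inv_pow, ← zpow_natCast, ← zpow_neg]
            exact zpow_le_zpow_right₀ (by exact_mod_cast hp.one_lt.le) (by push_cast; omega)
      _ < δ := hn
    apply hts
    apply hball
    simpa [Metric.mem_ball, dist_eq_norm] using hnorm'
  obtain ⟨n, hn⟩ := nbhd 1 one_pos
  refine ⟨n, fun u hu => ?_⟩
  set x : ℚ_[ℓ] := ((χ u : ℚ_[ℓ]ˣ) : ℚ_[ℓ]) with hx
  have hx1 : ‖x - 1‖ < 1 := hn u hu
  -- powers keep the same norm
  have hiter : ∀ m : ℕ, ‖x ^ p ^ m - 1‖ = ‖x - 1‖ := by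
    intro m
    induction m with
    | zero => simp
    | succ m ih =>
        rw [pow_succ, pow_mul]
        rw [norm_pow_sub_one hlp (by rw [ih]; exact hx1), ih]
  -- norm is smaller than every ε
  have hsmall : ∀ ε : ℝ, 0 < ε → ‖x - 1‖ < ε := by
    intro ε hε
    obtain ⟨n', hn'⟩ := nbhd ε hε
    have hdvd : (p : ℤ_[p]) ^ (n' + 1) ∣ ((u ^ p ^ n' : ℤ_[p]ˣ) : ℤ_[p]) - 1 := by
      have h2 : (p : ℤ_[p]) ^ (n + 1 + n') ∣ ((u ^ p ^ n' : ℤ_[p]ˣ) : ℤ_[p]) - 1 := by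
        simpa [Units.val_pow_eq_pow_val] using pow_iter (by omega : 1 ≤ n + 1) hu n'
      exact dvd_trans (pow_dvd_pow _ (by omega)) h2
    have := hn' _ hdvd
    rw [map_pow] at this
    rw [← hiter n']
    simpa [hx, Units.val_pow_eq_pow_val] using this
  have hzero : x - 1 = 0 := by
    by_contra h
    exact absurd (hsmall _ (norm_pos_iff.mpr h)) (lt_irrefl _)
  have : x = 1 := sub_eq_zero.mp hzero
  ext
  simpa [hx] using this
end

section
/- Let p and ℓ be distinct primes and let χ : ℤ_p^× → ℚ_ℓ^× be a continuous group homomorphism. Then there exist a natural number n and a group homomorphism χ̄ : (ℤ/p^{n+1}ℤ)^× → ℚ_ℓ^× such that χ = χ̄ ∘ π, where π : ℤ_p^× → (ℤ/p^{n+1}ℤ)^× is the homomorphism induced on units by reduction modulo p^{n+1}. -/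
open Finset in
lemma geom_sum_sub_card_norm_le {K : Type*} [NormedCommRing K] [NormOneClass K] [IsUltrametricDist K]
    (z : K) (hz : ‖z‖ ≤ 1) (N : ℕ) :
    ‖(∑ i ∈ range N, z ^ i) - N‖ ≤ ‖z - 1‖ := by
  have h : (∑ i ∈ range N, z ^ i) - N = ∑ i ∈ range N, (z ^ i - 1) := by
    rw [Finset.sum_sub_distrib]
    simp
  rw [h]
  apply IsUltrametricDist.norm_sum_le_of_forall_le_of_nonneg (norm_nonneg _)
  intro i _
  calc ‖z ^ i - 1‖ = ‖(∑ j ∈ range i, z ^ j) * (z - 1)‖ := by rw [geom_sum_mul]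
    _ ≤ ‖∑ j ∈ range i, z ^ j‖ * ‖z - 1‖ := norm_mul_le _ _
    _ ≤ 1 * ‖z - 1‖ := by
        gcongr
        exact IsUltrametricDist.norm_sum_le_of_forall_le_of_nonneg zero_le_one
          fun j _ => (norm_pow_le _ _).trans (pow_le_one₀ (norm_nonneg _) hz)
    _ = ‖z - 1‖ := one_mul _

lemma padic_pow_contract {ℓ : ℕ} [Fact ℓ.Prime] (v : ℚ_[ℓ]) (hv : ‖v - 1‖ ≤ (ℓ : ℝ)⁻¹) :
    ‖v ^ ℓ - 1‖ ≤ (ℓ : ℝ)⁻¹ * ‖v - 1‖ := by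
  have hl1 : (1 : ℝ) < ℓ := by exact_mod_cast (Fact.out : ℓ.Prime).one_lt
  have hinv : (ℓ : ℝ)⁻¹ < 1 := inv_lt_one_of_one_lt₀ hl1
  have hv1 : ‖v‖ ≤ 1 := by
    calc ‖v‖ = ‖(v - 1) + 1‖ := by ring_nf
      _ ≤ max ‖v - 1‖ ‖(1 : ℚ_[ℓ])‖ := IsUltrametricDist.norm_add_le_max _ _
      _ ≤ 1 := by rw [norm_one]; exact max_le (hv.trans hinv.le) le_rfl
  have key : v ^ ℓ - 1 = (∑ i ∈ Finset.range ℓ, v ^ i) * (v - 1) := (geom_sum_mul v ℓ).symm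
  have hS : ‖∑ i ∈ Finset.range ℓ, v ^ i‖ ≤ (ℓ : ℝ)⁻¹ := by
    have h1 : ‖(∑ i ∈ Finset.range ℓ, v ^ i) - (ℓ : ℚ_[ℓ])‖ ≤ ‖v - 1‖ := by
      simpa using geom_sum_sub_card_norm_le v hv1 ℓ
    have h2 : ‖(ℓ : ℚ_[ℓ])‖ = (ℓ : ℝ)⁻¹ := Padic.norm_p
    calc ‖∑ i ∈ Finset.range ℓ, v ^ i‖
        = ‖((∑ i ∈ Finset.range ℓ, v ^ i) - (ℓ : ℚ_[ℓ])) + (ℓ : ℚ_[ℓ])‖ := by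
          rw [sub_add_cancel]
      _ ≤ max ‖(∑ i ∈ Finset.range ℓ, v ^ i) - (ℓ : ℚ_[ℓ])‖ ‖(ℓ : ℚ_[ℓ])‖ :=
          IsUltrametricDist.norm_add_le_max _ _
      _ ≤ (ℓ : ℝ)⁻¹ := max_le ((h1.trans hv)) h2.le
  calc ‖v ^ ℓ - 1‖ = ‖∑ i ∈ Finset.range ℓ, v ^ i‖ * ‖v - 1‖ := by rw [key, norm_mul]
    _ ≤ (ℓ : ℝ)⁻¹ * ‖v - 1‖ := by gcongr

lemma padic_pow_contract_iter {ℓ : ℕ} [Fact ℓ.Prime] (v : ℚ_[ℓ]) (hv : ‖v - 1‖ ≤ (ℓ : ℝ)⁻¹)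
    (k : ℕ) : ‖v ^ ℓ ^ k - 1‖ ≤ ((ℓ : ℝ)⁻¹) ^ k * ‖v - 1‖ := by
  induction k with
  | zero => simp
  | succ k ih =>
    have hnn : (0 : ℝ) ≤ (ℓ : ℝ)⁻¹ := by positivity
    have hw : ‖v ^ ℓ ^ k - 1‖ ≤ (ℓ : ℝ)⁻¹ :=
      ih.trans (by
        have hle1 : ((ℓ : ℝ))⁻¹ ≤ 1 :=
          inv_le_one_of_one_le₀ (by exact_mod_cast (Fact.out : ℓ.Prime).one_le)
        have : ((ℓ : ℝ)⁻¹) ^ k * ‖v - 1‖ ≤ 1 ^ k * (ℓ : ℝ)⁻¹ :=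
          mul_le_mul (pow_le_pow_left₀ (by positivity) hle1 k) hv (norm_nonneg _) (by positivity)
        simpa using this)
    have := padic_pow_contract (v ^ ℓ ^ k) hw
    rw [← pow_mul, ← pow_succ] at this
    calc ‖v ^ ℓ ^ (k + 1) - 1‖ ≤ (ℓ : ℝ)⁻¹ * ‖v ^ ℓ ^ k - 1‖ := this
      _ ≤ (ℓ : ℝ)⁻¹ * (((ℓ : ℝ)⁻¹) ^ k * ‖v - 1‖) := by gcongr
      _ = ((ℓ : ℝ)⁻¹) ^ (k + 1) * ‖v - 1‖ := by ring

lemma padicInt_pow_root {p : ℕ} [Fact p.Prime] (N : ℕ) (hN : ‖((N : ℕ) : ℤ_[p])‖ = 1)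
    (x : ℤ_[p]) (hx : ‖x - 1‖ < 1) :
    ∃ y : ℤ_[p], y ^ N = x ∧ ‖y - 1‖ ≤ ‖x - 1‖ := by
  set F : Polynomial ℤ_[p] := Polynomial.X ^ N - Polynomial.C x with hF
  have heval : F.eval 1 = 1 - x := by simp [hF]
  have hderiv : F.derivative.eval 1 = (N : ℤ_[p]) := by
    simp [hF, Polynomial.derivative_X_pow]
  have hnorm : ‖F.eval 1‖ < ‖F.derivative.eval 1‖ ^ 2 := by
    rw [heval, hderiv, hN, one_pow, norm_sub_rev]; exact hx
  obtain ⟨z, hz0, hz1, -, -⟩ := hensels_lemma hnorm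
  rw [Polynomial.coe_aeval_eq_eval, hderiv, hN] at hz1
  have hzN : z ^ N = x := by
    have h := hz0
    simp only [Polynomial.coe_aeval_eq_eval, hF, Polynomial.eval_sub, Polynomial.eval_pow, Polynomial.eval_X,
      Polynomial.eval_C, sub_eq_zero] at h
    exact h
  set S := ∑ i ∈ Finset.range N, z ^ i with hSdef
  have hSsub : ‖S - (N : ℤ_[p])‖ ≤ ‖z - 1‖ := by
    simpa using geom_sum_sub_card_norm_le z z.norm_le_one N
  have hSsub1 : ‖S - (N : ℤ_[p])‖ < 1 := lt_of_le_of_lt hSsub hz1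
  have hS1 : ‖S‖ = 1 := by
    refine le_antisymm S.norm_le_one ?_
    by_contra h
    push_neg at h
    have hlt : ‖((N : ℕ) : ℤ_[p])‖ < 1 := by
      calc ‖((N : ℕ) : ℤ_[p])‖ = ‖S - (S - (N : ℤ_[p]))‖ := by rw [sub_sub_cancel]
        _ = ‖S + -(S - (N : ℤ_[p]))‖ := by rw [sub_eq_add_neg]
        _ ≤ max ‖S‖ ‖-(S - (N : ℤ_[p]))‖ := IsUltrametricDist.norm_add_le_max _ _
        _ = max ‖S‖ ‖S - (N : ℤ_[p])‖ := by rw [norm_neg]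
        _ < 1 := max_lt h hSsub1
    rw [hN] at hlt
    exact lt_irrefl _ hlt
  have hfac : x - 1 = S * (z - 1) := by rw [← hzN, ← geom_sum_mul]
  have : ‖x - 1‖ = ‖z - 1‖ := by rw [hfac, norm_mul, hS1, one_mul]
  exact ⟨z, hzN, this.ge⟩

lemma norm_lpow_eq_one {p ℓ : ℕ} [Fact p.Prime] (hl : ℓ.Prime) (hpl : p ≠ ℓ) (k : ℕ) :
    ‖((ℓ ^ k : ℕ) : ℤ_[p])‖ = 1 := by
  have hbase : ‖((ℓ : ℕ) : ℤ_[p])‖ = 1 := by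
    refine le_antisymm (PadicInt.norm_le_one _) ?_
    by_contra h
    push_neg at h
    have hlt : ‖((ℓ : ℤ) : ℤ_[p])‖ < 1 := by exact_mod_cast h
    rw [PadicInt.norm_int_lt_one_iff_dvd] at hlt
    have hdvd : p ∣ ℓ := by exact_mod_cast hlt
    exact hpl ((Nat.prime_dvd_prime_iff_eq (Fact.out : p.Prime) hl).mp hdvd)
  push_cast
  induction k with
  | zero => simp
  | succ k ih => rw [pow_succ, norm_mul, ih, hbase, one_mul]

lemma unitsMap_toZModPow_surjective (p : ℕ) [Fact p.Prime] (n : ℕ) :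
    Function.Surjective (Units.map (PadicInt.toZModPow (p := p) (n + 1)).toMonoidHom) := by
  have hp : p.Prime := Fact.out
  haveI : NeZero (p ^ (n + 1)) := ⟨pow_ne_zero _ hp.pos.ne'⟩
  haveI : Fact (1 < p ^ (n + 1)) := ⟨Nat.one_lt_pow (Nat.succ_ne_zero n) hp.one_lt⟩
  intro w
  set x : ℤ_[p] := ((w : ZMod (p ^ (n + 1))).val : ℤ_[p]) with hxdef
  have hx : PadicInt.toZModPow (n + 1) x = (w : ZMod (p ^ (n + 1))) := by
    rw [hxdef, map_natCast]
    exact ZMod.natCast_rightInverse _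
  have hux : IsUnit x := by
    rw [PadicInt.isUnit_iff]
    refine le_antisymm (PadicInt.norm_le_one _) ?_
    by_contra h
    push_neg at h
    rw [PadicInt.norm_lt_one_iff_dvd] at h
    obtain ⟨c, hc⟩ := h
    have hw : (w : ZMod (p ^ (n + 1))) = (p : ZMod (p ^ (n + 1))) * PadicInt.toZModPow (n + 1) c := by
      rw [← hx, hc, map_mul, map_natCast]
    have hunit : IsUnit ((p : ZMod (p ^ (n + 1))) * PadicInt.toZModPow (n + 1) c) := by
      rw [← hw]; exact w.isUnit
    have hzero : ((p : ZMod (p ^ (n + 1))) * PadicInt.toZModPow (n + 1) c) ^ (n + 1) = 0 := by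
      rw [mul_pow]
      have : ((p : ZMod (p ^ (n + 1)))) ^ (n + 1) = 0 := by
        rw [← Nat.cast_pow, ZMod.natCast_self]
      rw [this, zero_mul]
    have := hunit.pow (n + 1)
    rw [hzero] at this
    exact zero_ne_one (isUnit_zero_iff.mp this)
  refine ⟨hux.unit, Units.ext ?_⟩
  simpa [hux.unit_spec] using hx

lemma mem_ker_iff_norm {p : ℕ} [Fact p.Prime] (n : ℕ) (u : ℤ_[p]ˣ) :
    Units.map (PadicInt.toZModPow (p := p) (n + 1)).toMonoidHom u = 1 ↔
      ‖(u : ℤ_[p]) - 1‖ ≤ (p : ℝ) ^ (-(n + 1 : ℕ) : ℤ) := by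
  rw [PadicInt.norm_le_pow_iff_mem_span_pow, ← PadicInt.ker_toZModPow, RingHom.mem_ker,
    map_sub, map_one, sub_eq_zero, Units.ext_iff]
  constructor
  · intro h
    simpa using h
  · intro h
    simpa using h

lemma exists_pow_ball_subset {p : ℕ} [Fact p.Prime] {U : Set ℤ_[p]ˣ} (hU : IsOpen U)
    (h1 : (1 : ℤ_[p]ˣ) ∈ U) :
    ∃ n : ℕ, ∀ u : ℤ_[p]ˣ, ‖(u : ℤ_[p]) - 1‖ ≤ (p : ℝ) ^ (-(n + 1 : ℕ) : ℤ) → u ∈ U := by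
  have hp1 : (1 : ℝ) < p := by exact_mod_cast (Fact.out : p.Prime).one_lt
  obtain ⟨O, hO, hOU⟩ := (Units.isEmbedding_embedProduct (M := ℤ_[p])).toIsInducing.isOpen_iff.mp hU
  have h1O : Units.embedProduct ℤ_[p] 1 ∈ O := by
    rw [← hOU] at h1; exact h1
  obtain ⟨ε, hε, hball⟩ := Metric.isOpen_iff.mp hO _ h1O
  obtain ⟨n, hn⟩ := exists_pow_lt_of_lt_one hε (inv_lt_one_of_one_lt₀ hp1)
  refine ⟨n, fun u hu => ?_⟩
  have hlt : ‖(u : ℤ_[p]) - 1‖ < ε := by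
    refine lt_of_le_of_lt hu (lt_of_le_of_lt ?_ hn)
    rw [zpow_neg, zpow_natCast, ← inv_pow]
    exact pow_le_pow_of_le_one (by positivity) (inv_le_one_of_one_le₀ hp1.le) (by omega)
  have hinv : ‖((u⁻¹ : ℤ_[p]ˣ) : ℤ_[p]) - 1‖ = ‖(u : ℤ_[p]) - 1‖ := by
    have hfac : ((u⁻¹ : ℤ_[p]ˣ) : ℤ_[p]) - 1 = ((u⁻¹ : ℤ_[p]ˣ) : ℤ_[p]) * (1 - (u : ℤ_[p])) := by
      rw [mul_sub, mul_one]
      congr 1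
      exact (Units.inv_mul u).symm
    have hnu : ‖((u⁻¹ : ℤ_[p]ˣ) : ℤ_[p])‖ = 1 := PadicInt.isUnit_iff.mp ⟨u⁻¹, rfl⟩
    rw [hfac, norm_mul, hnu, one_mul, norm_sub_rev]
  rw [← hOU]
  apply hball
  rw [Metric.mem_ball, Prod.dist_eq]
  apply max_lt
  · simpa [dist_eq_norm] using hlt
  · show dist (MulOpposite.op _) (MulOpposite.op _) < ε
    rw [MulOpposite.dist_op, dist_eq_norm]
    simp only [inv_one, Units.val_one]
    rw [hinv]
    exact hlt

/-- Let `p` and `ℓ` be distinct primes and `χ : ℤ_pˣ → ℚ_ℓˣ` a continuous group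
homomorphism. Then `χ` factors through the units of `ℤ/p^(n+1)ℤ` for some `n`:
there is a homomorphism `χ̄ : (ℤ/p^(n+1)ℤ)ˣ → ℚ_ℓˣ` with `χ = χ̄ ∘ π`, where `π`
is induced on units by reduction modulo `p^(n+1)`. -/
theorem continuous_padic_char_factors (p ℓ : ℕ) [Fact p.Prime] [Fact ℓ.Prime]
    (hpl : p ≠ ℓ) (χ : ℤ_[p]ˣ →* ℚ_[ℓ]ˣ) (hχ : Continuous χ) :
    ∃ (n : ℕ) (χbar : (ZMod (p ^ (n + 1)))ˣ →* ℚ_[ℓ]ˣ),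
      χ = χbar.comp (Units.map (PadicInt.toZModPow (p := p) (n + 1)).toMonoidHom) := by
  have hl : ℓ.Prime := Fact.out
  have hlR : (1 : ℝ) < ℓ := by exact_mod_cast hl.one_lt
  have hlinv : (ℓ : ℝ)⁻¹ < 1 := inv_lt_one_of_one_lt₀ hlR
  -- the open set U of units sent into the ball of radius ℓ⁻¹ around 1
  set U : Set ℤ_[p]ˣ := (fun u : ℤ_[p]ˣ => ((χ u : ℚ_[ℓ]))) ⁻¹' (Metric.ball (1 : ℚ_[ℓ]) (ℓ : ℝ)⁻¹)
    with hUdef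
  have hUopen : IsOpen U :=
    (Metric.isOpen_ball).preimage (Units.continuous_val.comp hχ)
  have h1U : (1 : ℤ_[p]ˣ) ∈ U := by
    have hone : ((χ 1 : ℚ_[ℓ])) = 1 := by rw [map_one, Units.val_one]
    simp only [hUdef, Set.mem_preimage, hone, Metric.mem_ball, dist_self]
    exact inv_pos.mpr (lt_trans zero_lt_one hlR)
  obtain ⟨n, hn⟩ := exists_pow_ball_subset hUopen h1U
  have hker : (Units.map (PadicInt.toZModPow (p := p) (n + 1)).toMonoidHom).ker ≤ χ.ker := by
    intro u hu
    rw [MonoidHom.mem_ker] at hu ⊢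
    have hnorm : ‖(u : ℤ_[p]) - 1‖ ≤ (p : ℝ) ^ (-(n + 1 : ℕ) : ℤ) := (mem_ker_iff_norm n u).mp hu
    have hlt1 : ‖(u : ℤ_[p]) - 1‖ < 1 := by
      refine lt_of_le_of_lt hnorm ?_
      have hp1 : (1 : ℝ) < p := by exact_mod_cast (Fact.out : p.Prime).one_lt
      exact zpow_lt_one_of_neg₀ hp1 (by omega)
    have key : ∀ k : ℕ, ‖(χ u : ℚ_[ℓ]) - 1‖ ≤ ((ℓ : ℝ)⁻¹) ^ k * (ℓ : ℝ)⁻¹ := by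
      intro k
      obtain ⟨y, hyN, hy⟩ := padicInt_pow_root (ℓ ^ k) (norm_lpow_eq_one hl hpl k)
        (u : ℤ_[p]) hlt1
      have hylt : ‖y - 1‖ < 1 := lt_of_le_of_lt hy hlt1
      have hyu : IsUnit y := by
        rw [PadicInt.isUnit_iff]
        refine le_antisymm (PadicInt.norm_le_one _) ?_
        have h1 : (1 : ℝ) ≤ max ‖y‖ ‖y - 1‖ := by
          calc (1 : ℝ) = ‖(1 : ℤ_[p])‖ := norm_one.symm
            _ = ‖y + -(y - 1)‖ := by ring_nf
            _ ≤ max ‖y‖ ‖-(y - 1)‖ := IsUltrametricDist.norm_add_le_max _ _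
            _ = max ‖y‖ ‖y - 1‖ := by rw [norm_neg]
        rcases max_cases ‖y‖ ‖y - 1‖ with ⟨heq, -⟩ | ⟨heq, -⟩
        · rwa [heq] at h1
        · rw [heq] at h1; linarith
      have hwval : ((hyu.unit : ℤ_[p]ˣ) : ℤ_[p]) = y := hyu.unit_spec
      have hwpow : hyu.unit ^ ℓ ^ k = u :=
        Units.ext (by rw [Units.val_pow_eq_pow_val, hwval, hyN])
      have hwU : hyu.unit ∈ U := hn _ (by rw [hwval]; exact hy.trans hnorm)
      have hχw : ‖(χ hyu.unit : ℚ_[ℓ]) - 1‖ ≤ (ℓ : ℝ)⁻¹ := by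
        rw [hUdef] at hwU
        simp only [Set.mem_preimage, Metric.mem_ball, dist_eq_norm] at hwU
        exact hwU.le
      have hiter := padic_pow_contract_iter ((χ hyu.unit : ℚ_[ℓ])) hχw k
      have hval : ((χ hyu.unit : ℚ_[ℓ])) ^ ℓ ^ k = (χ u : ℚ_[ℓ]) := by
        rw [← Units.val_pow_eq_pow_val, ← map_pow, hwpow]
      rw [hval] at hiter
      calc ‖(χ u : ℚ_[ℓ]) - 1‖ ≤ ((ℓ : ℝ)⁻¹) ^ k * ‖(χ hyu.unit : ℚ_[ℓ]) - 1‖ := hiter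
        _ ≤ ((ℓ : ℝ)⁻¹) ^ k * (ℓ : ℝ)⁻¹ := by gcongr
    have hval1 : (χ u : ℚ_[ℓ]) = 1 := by
      by_contra hne
      have hpos : 0 < ‖(χ u : ℚ_[ℓ]) - 1‖ := norm_pos_iff.mpr (sub_ne_zero.mpr hne)
      obtain ⟨k, hk⟩ := exists_pow_lt_of_lt_one hpos hlinv
      have h1 := key k
      have h2 : ((ℓ : ℝ)⁻¹) ^ k * (ℓ : ℝ)⁻¹ ≤ ((ℓ : ℝ)⁻¹) ^ k * 1 :=
        mul_le_mul_of_nonneg_left hlinv.le (by positivity)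
      rw [mul_one] at h2
      linarith
    exact Units.ext (by rw [hval1, Units.val_one])
  refine ⟨n, (MonoidHom.liftOfSurjective _ (unitsMap_toZModPow_surjective p n)) ⟨χ, hker⟩, ?_⟩
  exact (MonoidHom.liftOfRightInverse_comp _ _ _ ⟨χ, hker⟩).symm
end
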